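/- If |M| = 2, then the two-sides-querying M-optimal stable matching rule (mapping each pair (p̄, q̄) of preference profiles to the M-optimal stable matching with respect to p̄ and q̄) is OSP-implementable for M, i.e., it is implemented by some two-sides-querying matching mechanism that is OSP for every man. -/

import Mathlib

/-- A preference list over `α` (a totally ordered subset of `α`), represented as a
duplicate-free list, most-preferred member first. Members of `α` not on the list
are unranked (unacceptable). -/
abbrev PrefList (α : Type) : Type := {l : List α // l.Nodup}

/-- `x ≻ y` according to `p`: `x` is ranked above `y` on `p`, or `x` appears on `p`
while `y` does not. -/
def prefers {α : Type} (p : PrefList α) (x y : α) : Prop :=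
  [x, y].Sublist p.val ∨ (x ∈ p.val ∧ y ∉ p.val)

/-- Strict preference over possible outcomes, where `none` means being unmatched:
being matched to someone on one's list is better than being unmatched, which is
better than being matched to someone not on one's list. -/
def outPrefers {α : Type} (p : PrefList α) : Option α → Option α → Prop
  | some x, some y => prefers p x y
  | some x, none => x ∈ p.val
  | none, some y => y ∉ p.val
  | none, none => False

/-- A preference list is full if it ranks every member of the opposite side. -/
def IsFull {α : Type} (p : PrefList α) : Prop := ∀ x : α, x ∈ p.val

/-- A matching between `M` and `W`: a one-to-one mapping between a subset of `M`
and a subset of `W`, recorded as a partial injective function from men to women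
(`μ.toFun m = none` meaning that `m` is unmatched). -/
structure Matching (M W : Type) where
  toFun : M → Option W
  inj : ∀ ⦃m m' : M⦄ ⦃w : W⦄, toFun m = some w → toFun m' = some w → m = m'

/-- Woman `w` strictly prefers man `m` (according to her list `q`) over the partner
matched to her by `μ` (or over remaining unmatched, if `μ` leaves her unmatched). -/
def womanPrefersOver {M W : Type} (q : PrefList M) (μ : Matching M W) (w : W) (m : M) : Prop :=
  (∃ m', μ.toFun m' = some w ∧ prefers q m m') ∨
    ((∀ m', μ.toFun m' ≠ some w) ∧ m ∈ q.val)

/-- `μ` is stable with respect to men's profile `pbar` and women's profile `qbar`: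
there is no man and woman each preferring the other over their match under `μ`, and
no participant is matched with a partner not on their preference list. -/
def IsStable {M W : Type} (pbar : M → PrefList W) (qbar : W → PrefList M)
    (μ : Matching M W) : Prop :=
  ¬ ((∃ m w, outPrefers (pbar m) (some w) (μ.toFun m) ∧ womanPrefersOver (qbar w) μ w m) ∨
     (∃ m w, μ.toFun m = some w ∧ (w ∉ (pbar m).val ∨ m ∉ (qbar w).val)))

/-- `C` is `qbar`-stable: `C pbar` is stable with respect to `pbar` and `qbar` for
every men's profile `pbar`. -/
def IsStableRule {M W : Type} (qbar : W → PrefList M)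
    (C : (M → PrefList W) → Matching M W) : Prop :=
  ∀ pbar, IsStable pbar qbar (C pbar)

/-- `C` is the `M`-optimal stable matching rule `C^qbar`: it maps each men's profile
`pbar` to a stable matching that every man weakly prefers to every stable matching. -/
def IsMOptimalStableRule {M W : Type} (qbar : W → PrefList M)
    (C : (M → PrefList W) → Matching M W) : Prop :=
  ∀ pbar, IsStable pbar qbar (C pbar) ∧
    ∀ μ, IsStable pbar qbar μ → ∀ m, ¬ outPrefers (pbar m) (μ.toFun m) ((C pbar).toFun m)

/-- `C` is strategy-proof for man `m`. -/
def StrategyProofFor {M W : Type} [DecidableEq M]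
    (C : (M → PrefList W) → Matching M W) (m : M) : Prop :=
  ∀ (pbar : M → PrefList W) (p' : PrefList W),
    ¬ outPrefers (pbar m) ((C (Function.update pbar m p')).toFun m) ((C pbar).toFun m)

/-- A women's profile `qbar` is cyclical if there are men `a`, `b`, `c` and women
`x`, `y` with `a ≻ₓ b ≻ₓ c ≻_y a`. -/
def Cyclical {M W : Type} (qbar : W → PrefList M) : Prop :=
  ∃ (a b c : M) (x y : W),
    prefers (qbar x) a b ∧ prefers (qbar x) b c ∧ prefers (qbar y) c a

/-- A one-side-querying extensive-form matching mechanism for `M` over `W`: a rooted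
tree each of whose leaves is labeled by a matching and each of whose internal nodes
queries a man; the edges out of an internal node querying `q` are the fibers of the
function `next` (two preference lists for `q` lie on the same outgoing edge iff they
are routed to the same subtree). -/
inductive Mech (M W : Type) : Type
  | leaf (μ : Matching M W)
  | node (q : M) (next : PrefList W → Mech M W)

/-- The matching rule implemented by a mechanism: route the profile from the root to
a leaf and output that leaf's matching. -/
def Mech.run {M W : Type} : Mech M W → (M → PrefList W) → Matching M W
  | .leaf μ, _ => μ
  | .node q next, pbar => (next (pbar q)).run pbar

/-- Auxiliary definition of obvious strategy-proofness for man `m`: `P` is the set of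
profiles passing through the current node. At each node querying `m`, for all profiles
`pbar`, `pbar'` passing through the node at which `m`'s lists diverge (are routed to
distinct subtrees), the outcome of `pbar'` is not strictly preferred (according to
`pbar m`) to the outcome of `pbar`. -/
def Mech.OSPAux {M W : Type} (m : M) : Mech M W → Set (M → PrefList W) → Prop
  | .leaf _, _ => True
  | .node q next, P =>
      (q = m → ∀ pbar ∈ P, ∀ pbar' ∈ P, next (pbar m) ≠ next (pbar' m) →
        ¬ outPrefers (pbar m) (((next (pbar' m)).run pbar').toFun m)
            (((next (pbar m)).run pbar).toFun m)) ∧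
      ∀ p : PrefList W, Mech.OSPAux m (next p) {pbar ∈ P | next (pbar q) = next p}

/-- `I` is obviously strategy-proof (OSP) for man `m`. -/
def Mech.OSPFor {M W : Type} (I : Mech M W) (m : M) : Prop :=
  Mech.OSPAux m I Set.univ

/-- A matching rule is OSP-implementable if it is implemented by some mechanism that
is OSP for every man. -/
def OSPImplementable {M W : Type} (C : (M → PrefList W) → Matching M W) : Prop :=
  ∃ I : Mech M W, (∀ m : M, I.OSPFor m) ∧ ∀ pbar, I.run pbar = C pbar

/-- A two-sides-querying extensive-form matching mechanism: internal nodes may query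
either a man (about his preference list over `W`) or a woman (about her preference
list over `M`). -/
inductive Mech2 (M W : Type) : Type
  | leaf (μ : Matching M W)
  | nodeM (q : M) (next : PrefList W → Mech2 M W)
  | nodeW (q : W) (next : PrefList M → Mech2 M W)

/-- The two-sides-querying matching rule implemented by a two-sides-querying mechanism. -/
def Mech2.run {M W : Type} :
    Mech2 M W → (M → PrefList W) → (W → PrefList M) → Matching M W
  | .leaf μ, _, _ => μ
  | .nodeM q next, pbar, qbar => (next (pbar q)).run pbar qbar
  | .nodeW q next, pbar, qbar => (next (qbar q)).run pbar qbar

/-- Auxiliary definition of obvious strategy-proofness of a two-sides-querying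
mechanism for man `m`; `P` is the set of two-sided profiles passing through the
current node. -/
def Mech2.OSPAux {M W : Type} (m : M) :
    Mech2 M W → Set ((M → PrefList W) × (W → PrefList M)) → Prop
  | .leaf _, _ => True
  | .nodeM q next, P =>
      (q = m → ∀ r ∈ P, ∀ r' ∈ P, next (r.1 m) ≠ next (r'.1 m) →
        ¬ outPrefers (r.1 m) (((next (r'.1 m)).run r'.1 r'.2).toFun m)
            (((next (r.1 m)).run r.1 r.2).toFun m)) ∧
      ∀ p : PrefList W, Mech2.OSPAux m (next p) {r ∈ P | next (r.1 q) = next p}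
  | .nodeW q next, P =>
      ∀ p : PrefList M, Mech2.OSPAux m (next p) {r ∈ P | next (r.2 q) = next p}

/-- A two-sides-querying mechanism `I` is obviously strategy-proof (OSP) for man `m`. -/
def Mech2.OSPForM {M W : Type} (I : Mech2 M W) (m : M) : Prop :=
  Mech2.OSPAux m I Set.univ

/-- `C` is the two-sides-querying M-optimal stable matching rule: it maps each pair
of profiles to a stable matching that every man weakly prefers to every stable
matching. -/
def IsMOptimalStableRule2 {M W : Type}
    (C : (M → PrefList W) → (W → PrefList M) → Matching M W) : Prop :=
  ∀ pbar qbar, IsStable pbar qbar (C pbar qbar) ∧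
    ∀ μ, IsStable pbar qbar μ →
      ∀ m, ¬ outPrefers (pbar m) (μ.toFun m) ((C pbar qbar).toFun m)


/-! ### Auxiliary lemmas -/

section ListAux
variable {α : Type}

theorem aux_pair_sublist_total {l : List α} {x y : α} (hx : x ∈ l) (hy : y ∈ l)
    (hxy : x ≠ y) : [x, y].Sublist l ∨ [y, x].Sublist l := by
  induction l with
  | nil => simp at hx
  | cons a t ih =>
    rcases List.mem_cons.1 hx with rfl | hx'
    · have hy' : y ∈ t := by
        rcases List.mem_cons.1 hy with rfl | h
        · exact absurd rfl hxy
        · exact h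
      exact Or.inl (List.Sublist.cons₂ x (List.singleton_sublist.2 hy'))
    · rcases List.mem_cons.1 hy with rfl | hy'
      · exact Or.inr (List.Sublist.cons₂ y (List.singleton_sublist.2 hx'))
      · exact (ih hx' hy').imp (List.Sublist.cons a) (List.Sublist.cons a)

theorem aux_find?_first {l : List α} {P : α → Bool} {t w : α} (hn : l.Nodup)
    (hf : l.find? P = some t) (hs : [w, t].Sublist l) (hw : P w = true) : False := by
  induction l with
  | nil => simp at hf
  | cons a tl ih =>
    have hna : a ∉ tl := (List.nodup_cons.1 hn).1
    by_cases hPa : P a = true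
    · rw [List.find?_cons_of_pos hPa] at hf
      have hta : t = a := by simpa using hf.symm
      subst hta
      cases hs with
      | cons _ h => exact hna (h.subset (by simp))
      | cons_cons _ h => exact hna (h.subset (by simp))
    · rw [List.find?_cons_of_neg (by simpa using hPa)] at hf
      cases hs with
      | cons _ h => exact ih (List.nodup_cons.1 hn).2 hf h
      | cons_cons _ h => exact hPa hw

end ListAux

section PrefAux
variable {α : Type}

theorem aux_prefers_mem_left {p : PrefList α} {x y : α} (h : prefers p x y) : x ∈ p.val := by
  rcases h with h | h
  · exact h.subset (by simp)
  · exact h.1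

theorem aux_prefers_asymm {p : PrefList α} {x y : α} (h : prefers p x y) :
    ¬ prefers p y x := by
  have hx : x ∈ p.val := aux_prefers_mem_left h
  intro h'
  have hy : y ∈ p.val := aux_prefers_mem_left h'
  rcases h with h | h
  · rcases h' with h' | h'
    · have hnd : ([x, y] : List α).Nodup := h.nodup p.2
      have hxy : x ≠ y := by simpa using hnd
      -- both [x,y] and [y,x] sublists of nodup list: contradiction
      clear hx hy
      obtain ⟨l, hl⟩ : ∃ l : List α, l = p.val := ⟨p.val, rfl⟩
      rw [← hl] at h h'
      have hn : l.Nodup := hl ▸ p.2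
      clear hl
      induction l with
      | nil => simp at h
      | cons a t ih =>
        have hna : a ∉ t := (List.nodup_cons.1 hn).1
        cases h with
        | cons _ h1 =>
          cases h' with
          | cons _ h2 => exact ih h2 h1 (List.nodup_cons.1 hn).2
          | cons_cons _ h2 => exact hna (h1.subset (by simp))
        | cons_cons _ h1 =>
          cases h' with
          | cons _ h2 => exact hna (h2.subset (by simp))
          | cons_cons _ h2 => exact hxy rfl
    · exact h'.2 hx
  · exact h.2 hy

theorem aux_prefers_total {p : PrefList α} {x y : α} (hx : x ∈ p.val) (hy : y ∈ p.val)
    (hxy : x ≠ y) : prefers p x y ∨ prefers p y x :=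
  (aux_pair_sublist_total hx hy hxy).imp Or.inl Or.inl

/-- The most preferred element of `p` satisfying `S`. -/
noncomputable def firstIn (p : PrefList α) (S : α → Prop) : Option α :=
  p.val.find? (fun a => @decide (S a) (Classical.propDecidable _))

theorem firstIn_mem {p : PrefList α} {S : α → Prop} {t : α} (h : firstIn p S = some t) :
    t ∈ p.val ∧ S t := by
  refine ⟨List.mem_of_find?_eq_some h, ?_⟩
  have := List.find?_some h
  exact @of_decide_eq_true _ (Classical.propDecidable _) this

theorem firstIn_eq_none {p : PrefList α} {S : α → Prop} (h : firstIn p S = none)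
    {w : α} (hw : w ∈ p.val) : ¬ S w := by
  intro hS
  have := List.find?_eq_none.1 h w hw
  exact this (@decide_eq_true _ (Classical.propDecidable _) hS)

theorem firstIn_congr {p : PrefList α} {S S' : α → Prop} (h : ∀ a, S a ↔ S' a) :
    firstIn p S = firstIn p S' := by
  unfold firstIn
  congr 1
  funext a
  exact decide_eq_decide.2 (h a)

/-- Core dominance lemma: no outcome lying in `S` (or being unmatched) is strictly
preferred to the most preferred element of `S`. -/
theorem not_outPrefers_firstIn {p : PrefList α} {S : α → Prop} {o' : Option α}
    (h : ∀ w', o' = some w' → S w') : ¬ outPrefers p o' (firstIn p S) := by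
  cases ho : firstIn p S with
  | none =>
    cases o' with
    | none => simp [outPrefers]
    | some w' =>
      intro hc
      exact firstIn_eq_none ho (by exact hc) (h w' rfl)
  | some t =>
    obtain ⟨htm, htS⟩ := firstIn_mem ho
    cases o' with
    | none => intro hc; exact hc htm
    | some w' =>
      intro hc
      rcases (hc : prefers p w' t) with hs | hs
      · exact aux_find?_first p.2 ho hs (@decide_eq_true _ (Classical.propDecidable _) (h w' rfl))
      · exact hs.2 htm

theorem match_eq_firstIn {α : Type} {p : PrefList α} {S : α → Prop} {o : Option α}
    (hopt : ¬ outPrefers p (firstIn p S) o)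
    (hvalid : ∀ w, o = some w → w ∈ p.val ∧ S w) : o = firstIn p S := by
  cases hf : firstIn p S with
  | none =>
    cases ho : o with
    | none => rfl
    | some w =>
      obtain ⟨hwp, hwS⟩ := hvalid w ho
      exact absurd hwS (firstIn_eq_none hf hwp)
  | some t =>
    rw [hf] at hopt
    obtain ⟨htm, htS⟩ := firstIn_mem hf
    cases ho : o with
    | none => rw [ho] at hopt; exact absurd htm hopt
    | some w =>
      obtain ⟨hwp, hwS⟩ := hvalid w ho
      rw [ho] at hopt
      by_cases hwt : w = t
      · rw [hwt]
      · rcases aux_prefers_total htm hwp (Ne.symm hwt) with h | h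
        · exact absurd h hopt
        · rcases h with hs | hs
          · exact absurd (aux_find?_first p.2 hf hs (@decide_eq_true _ (Classical.propDecidable _) hwS)) id
          · exact absurd htm hs.2
  
end PrefAux

section Char
variable {M W : Type}

attribute [local instance] Classical.propDecidable

def poolOf (qbar : W → PrefList M) (a : M) (w : W) : Prop := a ∈ (qbar w).val

theorem aux_womanPrefers_mem {q : PrefList M} {μ : Matching M W} {w : W} {m : M}
    (h : womanPrefersOver q μ w m) : m ∈ q.val := by
  rcases h with ⟨m', _, hp⟩ | ⟨_, hm⟩
  · exact aux_prefers_mem_left hp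
  · exact hm

/-- Build a matching from the two men's assignments. -/
noncomputable def mk2 (a b : M) (hall : ∀ m : M, m = a ∨ m = b) (o₁ o₂ : Option W)
    (hdisj : ∀ w, o₁ = some w → o₂ = some w → a = b) : Matching M W where
  toFun m := if m = a then o₁ else o₂
  inj := by
    intro m m' w hm hm'
    by_cases hma : m = a <;> by_cases hm'a : m' = a
    · rw [hma, hm'a]
    · rw [if_pos hma] at hm
      rw [if_neg hm'a] at hm'
      rcases hall m' with rfl | rfl
      · exact absurd rfl hm'a
      · rw [hma, hdisj w hm hm']
    · rw [if_neg hma] at hm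
      rw [if_pos hm'a] at hm'
      rcases hall m with rfl | rfl
      · exact absurd rfl hma
      · rw [hm'a, (hdisj w hm' hm).symm]
    · rcases hall m with rfl | rfl
      · exact absurd rfl hma
      · rcases hall m' with rfl | rfl
        · exact absurd rfl hm'a
        · rfl

theorem mk2_fst (a b : M) (hall : ∀ m : M, m = a ∨ m = b) (o₁ o₂ : Option W) (hdisj) :
    (mk2 a b hall o₁ o₂ hdisj).toFun a = o₁ := if_pos rfl

theorem mk2_snd (a b : M) (hab : a ≠ b) (hall : ∀ m : M, m = a ∨ m = b) (o₁ o₂ : Option W)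
    (hdisj) : (mk2 a b hall o₁ o₂ hdisj).toFun b = o₂ := if_neg (fun h => hab h.symm)

/-- If man `a`'s favourite acceptable woman `w₀` prefers `a` over `b`, then the
M-optimal stable matching matches `a` with `w₀` and `b` with his favourite
acceptable woman other than `w₀`. -/
theorem clinch_char (C : (M → PrefList W) → (W → PrefList M) → Matching M W)
    (hC : IsMOptimalStableRule2 C) (a b : M) (hab : a ≠ b)
    (hall : ∀ m : M, m = a ∨ m = b) (pbar : M → PrefList W) (qbar : W → PrefList M)
    {w₀ : W} (hw : firstIn (pbar a) (poolOf qbar a) = some w₀)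
    (hT : ¬ prefers (qbar w₀) b a) :
    (C pbar qbar).toFun a = some w₀ ∧
      (C pbar qbar).toFun b = firstIn (pbar b) (fun w => poolOf qbar b w ∧ w ≠ w₀) := by
  obtain ⟨hw₀p, hw₀S⟩ := firstIn_mem hw
  have hdisj : ∀ w, (some w₀ : Option W) = some w →
      firstIn (pbar b) (fun w => poolOf qbar b w ∧ w ≠ w₀) = some w → a = b := by
    intro w h1 h2
    cases h1
    exact absurd rfl (firstIn_mem h2).2.2
  set E := mk2 a b hall (some w₀) (firstIn (pbar b) (fun w => poolOf qbar b w ∧ w ≠ w₀)) hdisj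
    with hEdef
  have hEa : E.toFun a = some w₀ := mk2_fst ..
  have hEb : E.toFun b = firstIn (pbar b) (fun w => poolOf qbar b w ∧ w ≠ w₀) :=
    mk2_snd a b hab ..
  have hE : IsStable pbar qbar E := by
    intro hbad
    rcases hbad with ⟨m, w, hop, hwpo⟩ | ⟨m, w, hm, hbadv⟩
    · have hq : m ∈ (qbar w).val := aux_womanPrefers_mem hwpo
      rcases hall m with rfl | rfl
      · rw [hEa, ← hw] at hop
        exact not_outPrefers_firstIn (fun w' h => by cases h; exact hq) hop
      · by_cases hww : w = w₀
        · subst hww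
          rcases hwpo with ⟨m', hm', hpref⟩ | ⟨hnone, _⟩
          · rcases hall m' with rfl | rfl
            · exact hT hpref
            · rw [hEb] at hm'
              exact absurd rfl (firstIn_mem hm').2.2
          · exact hnone a hEa
        · rw [hEb] at hop
          exact not_outPrefers_firstIn (fun w' h => by cases h; exact ⟨hq, hww⟩) hop
    · rcases hall m with rfl | rfl
      · rw [hEa] at hm
        cases hm
        exact hbadv.elim (fun h => h hw₀p) (fun h => h hw₀S)
      · rw [hEb] at hm
        obtain ⟨hwp, hwS⟩ := firstIn_mem hm
        exact hbadv.elim (fun h => h hwp) (fun h => h hwS.1)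
  obtain ⟨hst, hopt⟩ := hC pbar qbar
  have hvalid : ∀ m w, (C pbar qbar).toFun m = some w →
      w ∈ (pbar m).val ∧ m ∈ (qbar w).val := by
    intro m w h
    by_contra hcon
    exact hst (Or.inr ⟨m, w, h, not_and_or.1 hcon⟩)
  have ha : (C pbar qbar).toFun a = some w₀ := by
    have h1 := hopt E hE a
    rw [hEa, ← hw] at h1
    have h2 := match_eq_firstIn h1 (fun w h => ⟨(hvalid a w h).1, (hvalid a w h).2⟩)
    rw [h2, hw]
  refine ⟨ha, ?_⟩
  have h1 := hopt E hE b
  rw [hEb] at h1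
  refine match_eq_firstIn h1 (fun w h => ⟨(hvalid b w h).1, (hvalid b w h).2, ?_⟩)
  intro hww
  subst hww
  exact hab ((C pbar qbar).inj h ha).symm

/-- If neither man's favourite acceptable woman coincides with the other's, both get
their favourite acceptable woman under the M-optimal stable matching. -/
theorem pass_char (C : (M → PrefList W) → (W → PrefList M) → Matching M W)
    (hC : IsMOptimalStableRule2 C) (a b : M) (hab : a ≠ b)
    (hall : ∀ m : M, m = a ∨ m = b) (pbar : M → PrefList W) (qbar : W → PrefList M)
    (hcompat : ∀ w, firstIn (pbar a) (poolOf qbar a) = some w →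
      firstIn (pbar b) (poolOf qbar b) = some w → False) :
    (C pbar qbar).toFun a = firstIn (pbar a) (poolOf qbar a) ∧
      (C pbar qbar).toFun b = firstIn (pbar b) (poolOf qbar b) := by
  have hdisj : ∀ w, firstIn (pbar a) (poolOf qbar a) = some w →
      firstIn (pbar b) (poolOf qbar b) = some w → a = b :=
    fun w h1 h2 => absurd (hcompat w h1 h2) not_false
  set E := mk2 a b hall (firstIn (pbar a) (poolOf qbar a))
    (firstIn (pbar b) (poolOf qbar b)) hdisj with hEdef
  have hEa : E.toFun a = firstIn (pbar a) (poolOf qbar a) := mk2_fst ..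
  have hEb : E.toFun b = firstIn (pbar b) (poolOf qbar b) := mk2_snd a b hab ..
  have hE : IsStable pbar qbar E := by
    intro hbad
    rcases hbad with ⟨m, w, hop, hwpo⟩ | ⟨m, w, hm, hbadv⟩
    · have hq : m ∈ (qbar w).val := aux_womanPrefers_mem hwpo
      rcases hall m with rfl | rfl
      · rw [hEa] at hop
        exact not_outPrefers_firstIn (fun w' h => by cases h; exact hq) hop
      · rw [hEb] at hop
        exact not_outPrefers_firstIn (fun w' h => by cases h; exact hq) hop
    · rcases hall m with rfl | rfl
      · rw [hEa] at hm
        obtain ⟨hwp, hwS⟩ := firstIn_mem hm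
        exact hbadv.elim (fun h => h hwp) (fun h => h hwS)
      · rw [hEb] at hm
        obtain ⟨hwp, hwS⟩ := firstIn_mem hm
        exact hbadv.elim (fun h => h hwp) (fun h => h hwS)
  obtain ⟨hst, hopt⟩ := hC pbar qbar
  have hvalid : ∀ m w, (C pbar qbar).toFun m = some w →
      w ∈ (pbar m).val ∧ m ∈ (qbar w).val := by
    intro m w h
    by_contra hcon
    exact hst (Or.inr ⟨m, w, h, not_and_or.1 hcon⟩)
  constructor
  · have h1 := hopt E hE a
    rw [hEa] at h1
    exact match_eq_firstIn h1 (fun w h => ⟨(hvalid a w h).1, (hvalid a w h).2⟩)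
  · have h1 := hopt E hE b
    rw [hEb] at h1
    exact match_eq_firstIn h1 (fun w h => ⟨(hvalid b w h).1, (hvalid b w h).2⟩)

end Char

section Mechanism
variable {M W : Type}

attribute [local instance] Classical.propDecidable

/-- The men's profile built from the two men's lists. -/
noncomputable def twoProf (m₁ : M) (p₁ p₂ : PrefList W) : M → PrefList W :=
  fun m => if m = m₁ then p₁ else p₂

theorem twoProf_fst (m₁ : M) (p₁ p₂ : PrefList W) : twoProf m₁ p₁ p₂ m₁ = p₁ := if_pos rfl

theorem twoProf_snd (m₁ m₂ : M) (h12 : m₁ ≠ m₂) (p₁ p₂ : PrefList W) :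
    twoProf m₁ p₁ p₂ m₂ = p₂ := if_neg (fun hh => h12 hh.symm)

theorem twoProf_self (m₁ m₂ : M) (h12 : m₁ ≠ m₂) (hall : ∀ m : M, m = m₁ ∨ m = m₂)
    (x : M → PrefList W) : twoProf m₁ (x m₁) (x m₂) = x := by
  funext m
  rcases hall m with rfl | rfl
  · exact twoProf_fst ..
  · exact twoProf_snd _ _ h12 ..

/-- The clinch classifier: `some w₀` if the queried man's favourite acceptable woman
`w₀` prefers him over the other man (so he can "clinch" her), `none` otherwise. -/
noncomputable def clinch (m₁ m₂ : M) (qb : W → PrefList M) (p : PrefList W) : Option W :=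
  match firstIn p (poolOf qb m₁) with
  | none => none
  | some w => if prefers (qb w) m₂ m₁ then none else some w

theorem clinch_eq_some {m₁ m₂ : M} {qb : W → PrefList M} {p : PrefList W} {w₀ : W}
    (h : clinch m₁ m₂ qb p = some w₀) :
    firstIn p (poolOf qb m₁) = some w₀ ∧ ¬ prefers (qb w₀) m₂ m₁ := by
  unfold clinch at h
  split at h
  · exact absurd h (by simp)
  next w hw =>
    split at h
    · exact absurd h (by simp)
    next hnp =>
      cases h
      exact ⟨hw, hnp⟩

theorem clinch_eq_none {m₁ m₂ : M} {qb : W → PrefList M} {p : PrefList W} {w : W}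
    (h : clinch m₁ m₂ qb p = none) (hf : firstIn p (poolOf qb m₁) = some w) :
    prefers (qb w) m₂ m₁ := by
  unfold clinch at h
  rw [hf] at h
  split at h
  next hp => exact absurd hp (by simp)
  next w' hp =>
    have hww : w' = w := by injection hp with h'; exact h'.symm
    subst hww
    split at h
    next hp2 => exact hp2
    next hp2 => exact absurd h (by simp)

variable (C : (M → PrefList W) → (W → PrefList M) → Matching M W) (m₁ m₂ : M)
  (qb : W → PrefList M)

/-- Outcomes when man `m₁` can clinch. -/
theorem outcomeA (hC : IsMOptimalStableRule2 C) (h12 : m₁ ≠ m₂)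
    (hall : ∀ m : M, m = m₁ ∨ m = m₂) (p₁ p₂ : PrefList W) {w₀ : W}
    (h : clinch m₁ m₂ qb p₁ = some w₀) :
    (C (twoProf m₁ p₁ p₂) qb).toFun m₁ = some w₀ ∧
      (C (twoProf m₁ p₁ p₂) qb).toFun m₂ =
        firstIn p₂ (fun w => poolOf qb m₂ w ∧ w ≠ w₀) := by
  obtain ⟨hf, hT⟩ := clinch_eq_some h
  have := clinch_char C hC m₁ m₂ h12 hall (twoProf m₁ p₁ p₂) qb
    (by rw [twoProf_fst]; exact hf) hT
  rwa [twoProf_snd m₁ m₂ h12] at this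

/-- Outcome of `m₂` when `m₁` passes: his favourite acceptable woman. -/
theorem outcomeB_snd (hC : IsMOptimalStableRule2 C) (h12 : m₁ ≠ m₂)
    (hall : ∀ m : M, m = m₁ ∨ m = m₂) (p₁ p₂ : PrefList W)
    (h1 : clinch m₁ m₂ qb p₁ = none) :
    (C (twoProf m₁ p₁ p₂) qb).toFun m₂ = firstIn p₂ (poolOf qb m₂) := by
  have hall' : ∀ m : M, m = m₂ ∨ m = m₁ := fun m => (hall m).symm
  cases hc2 : clinch m₂ m₁ qb p₂ with
  | some v₀ =>
    obtain ⟨hf2, hT2⟩ := clinch_eq_some hc2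
    have := (clinch_char C hC m₂ m₁ h12.symm hall' (twoProf m₁ p₁ p₂) qb
      (by rw [twoProf_snd m₁ m₂ h12]; exact hf2) hT2).1
    rw [this, hf2]
  | none =>
    have hcompat : ∀ w, firstIn ((twoProf m₁ p₁ p₂) m₂) (poolOf qb m₂) = some w →
        firstIn ((twoProf m₁ p₁ p₂) m₁) (poolOf qb m₁) = some w → False := by
      intro w hb ha
      rw [twoProf_snd m₁ m₂ h12] at hb
      rw [twoProf_fst] at ha
      exact aux_prefers_asymm (clinch_eq_none h1 ha) (clinch_eq_none hc2 hb)
    have := (pass_char C hC m₂ m₁ h12.symm hall' (twoProf m₁ p₁ p₂) qb hcompat).1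
    rwa [twoProf_snd m₁ m₂ h12] at this

/-- Outcome of `m₁` when he passes: his favourite acceptable woman not clinched
by `m₂`. -/
theorem outcomeB_fst (hC : IsMOptimalStableRule2 C) (h12 : m₁ ≠ m₂)
    (hall : ∀ m : M, m = m₁ ∨ m = m₂) (p₁ p₂ : PrefList W)
    (h1 : clinch m₁ m₂ qb p₁ = none) :
    (C (twoProf m₁ p₁ p₂) qb).toFun m₁ =
      firstIn p₁ (fun w => poolOf qb m₁ w ∧ clinch m₂ m₁ qb p₂ ≠ some w) := by
  have hall' : ∀ m : M, m = m₂ ∨ m = m₁ := fun m => (hall m).symm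
  cases hc2 : clinch m₂ m₁ qb p₂ with
  | some v₀ =>
    obtain ⟨hf2, hT2⟩ := clinch_eq_some hc2
    have := (clinch_char C hC m₂ m₁ h12.symm hall' (twoProf m₁ p₁ p₂) qb
      (by rw [twoProf_snd m₁ m₂ h12]; exact hf2) hT2).2
    rw [twoProf_fst] at this
    rw [this]
    exact firstIn_congr (fun w => by
      constructor
      · rintro ⟨hp, hne⟩
        refine ⟨hp, fun hc => hne ?_⟩
        injection hc with hc'
        exact hc'.symm
      · rintro ⟨hp, hne⟩
        exact ⟨hp, fun hc => hne (by rw [hc])⟩)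
  | none =>
    have hcompat : ∀ w, firstIn ((twoProf m₁ p₁ p₂) m₂) (poolOf qb m₂) = some w →
        firstIn ((twoProf m₁ p₁ p₂) m₁) (poolOf qb m₁) = some w → False := by
      intro w hb ha
      rw [twoProf_snd m₁ m₂ h12] at hb
      rw [twoProf_fst] at ha
      exact aux_prefers_asymm (clinch_eq_none h1 ha) (clinch_eq_none hc2 hb)
    have := (pass_char C hC m₂ m₁ h12.symm hall' (twoProf m₁ p₁ p₂) qb hcompat).2
    rw [twoProf_fst] at this
    rw [this]
    exact firstIn_congr (fun w => by simp)

end Mechanism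

section Tree
variable {M W : Type}

attribute [local instance] Classical.propDecidable

noncomputable def finalA (C : (M → PrefList W) → (W → PrefList M) → Matching M W)
    (m₁ m₂ : M) (qb : W → PrefList M) : Mech2 M W :=
  Mech2.nodeM m₁ fun p₁ => Mech2.nodeM m₂ fun p₂ => Mech2.leaf (C (twoProf m₁ p₁ p₂) qb)

noncomputable def finalB (C : (M → PrefList W) → (W → PrefList M) → Matching M W)
    (m₁ m₂ : M) (qb : W → PrefList M) : Mech2 M W :=
  Mech2.nodeM m₂ fun p₂ => Mech2.nodeM m₁ fun p₁ => Mech2.leaf (C (twoProf m₁ p₁ p₂) qb)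

noncomputable def menPhase (C : (M → PrefList W) → (W → PrefList M) → Matching M W)
    (m₁ m₂ : M) (qb : W → PrefList M) : Mech2 M W :=
  Mech2.nodeM m₁ fun p =>
    if (clinch m₁ m₂ qb p).isSome then finalA C m₁ m₂ qb else finalB C m₁ m₂ qb

noncomputable def womenChain (C : (M → PrefList W) → (W → PrefList M) → Matching M W)
    (m₁ m₂ : M) : List W → (W → PrefList M) → Mech2 M W
  | [], f => menPhase C m₁ m₂ f
  | w :: ws, f => Mech2.nodeW w fun q => womenChain C m₁ m₂ ws (Function.update f w q)

variable (C : (M → PrefList W) → (W → PrefList M) → Matching M W) (m₁ m₂ : M)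
  (qb : W → PrefList M)

theorem run_finalA (h12 : m₁ ≠ m₂) (hall : ∀ m : M, m = m₁ ∨ m = m₂)
    (x : M → PrefList W) (y : W → PrefList M) :
    (finalA C m₁ m₂ qb).run x y = C x qb := by
  simp only [finalA, Mech2.run]
  rw [twoProf_self m₁ m₂ h12 hall x]

theorem run_finalB (h12 : m₁ ≠ m₂) (hall : ∀ m : M, m = m₁ ∨ m = m₂)
    (x : M → PrefList W) (y : W → PrefList M) :
    (finalB C m₁ m₂ qb).run x y = C x qb := by
  simp only [finalB, Mech2.run]
  rw [twoProf_self m₁ m₂ h12 hall x]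

theorem run_menPhase (h12 : m₁ ≠ m₂) (hall : ∀ m : M, m = m₁ ∨ m = m₂)
    (x : M → PrefList W) (y : W → PrefList M) :
    (menPhase C m₁ m₂ qb).run x y = C x qb := by
  simp only [menPhase, Mech2.run]
  by_cases h : (clinch m₁ m₂ qb (x m₁)).isSome
  · rw [if_pos h]
    exact run_finalA C m₁ m₂ qb h12 hall x y
  · rw [if_neg h]
    exact run_finalB C m₁ m₂ qb h12 hall x y

theorem run_womenChain (h12 : m₁ ≠ m₂) (hall : ∀ m : M, m = m₁ ∨ m = m₂)
    (ws : List W) : ∀ (f : W → PrefList M) (pbar : M → PrefList W) (qbar : W → PrefList M),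
    (∀ w, w ∉ ws → f w = qbar w) →
    (womenChain C m₁ m₂ ws f).run pbar qbar = C pbar qbar := by
  induction ws with
  | nil =>
    intro f pbar qbar hf
    have hfq : f = qbar := funext fun w => hf w (by simp)
    rw [womenChain, hfq]
    exact run_menPhase C m₁ m₂ qbar h12 hall pbar qbar
  | cons w ws ih =>
    intro f pbar qbar hf
    simp only [womenChain, Mech2.run]
    exact ih _ _ _ (fun w' hw' => by
      by_cases h : w' = w
      · subst h; simp
      · rw [Function.update_of_ne h]
        exact hf w' (fun hc => (List.mem_cons.1 hc).elim h hw'))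

theorem osp_finalA (hC : IsMOptimalStableRule2 C) (h12 : m₁ ≠ m₂)
    (hall : ∀ m : M, m = m₁ ∨ m = m₂) (m : M)
    (Q : Set ((M → PrefList W) × (W → PrefList M)))
    (hQ : ∀ r ∈ Q, (clinch m₁ m₂ qb (r.1 m₁)).isSome) :
    Mech2.OSPAux m (finalA C m₁ m₂ qb) Q := by
  rw [finalA]
  simp only [Mech2.OSPAux]
  constructor
  · intro hm r hr r' hr' hne
    subst hm
    obtain ⟨w₀, hw₀⟩ := Option.isSome_iff_exists.1 (hQ r hr)
    obtain ⟨w₀', hw₀'⟩ := Option.isSome_iff_exists.1 (hQ r' hr')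
    simp only [Mech2.run]
    rw [(outcomeA C m₁ m₂ qb hC h12 hall (r.1 m₁) (r.1 m₂) hw₀).1,
      (outcomeA C m₁ m₂ qb hC h12 hall (r'.1 m₁) (r'.1 m₂) hw₀').1,
      ← (clinch_eq_some hw₀).1]
    exact not_outPrefers_firstIn (fun w' h => by
      cases h; exact (firstIn_mem (clinch_eq_some hw₀').1).2)
  · intro p₁
    constructor
    · intro hm r hr r' hr' hne
      subst hm
      obtain ⟨hrQ, hre⟩ := hr
      obtain ⟨hr'Q, hr'e⟩ := hr'
      injection hre with _ h2
      have hCeq : ∀ z, C (twoProf m₁ (r.1 m₁) z) qb = C (twoProf m₁ p₁ z) qb := by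
        intro z
        have := congrFun h2 z
        injection this with h3
      simp only [Mech2.run]
      rw [← hCeq (r.1 m₂), ← hCeq (r'.1 m₂)]
      obtain ⟨w₀, hw₀⟩ := Option.isSome_iff_exists.1 (hQ r hrQ)
      rw [(outcomeA C m₁ m₂ qb hC h12 hall (r.1 m₁) (r.1 m₂) hw₀).2,
        (outcomeA C m₁ m₂ qb hC h12 hall (r.1 m₁) (r'.1 m₂) hw₀).2]
      exact not_outPrefers_firstIn (fun w' h => (firstIn_mem h).2)
    · intro p₂
      trivial

theorem osp_finalB (hC : IsMOptimalStableRule2 C) (h12 : m₁ ≠ m₂)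
    (hall : ∀ m : M, m = m₁ ∨ m = m₂) (m : M)
    (Q : Set ((M → PrefList W) × (W → PrefList M)))
    (hQ : ∀ r ∈ Q, clinch m₁ m₂ qb (r.1 m₁) = none) :
    Mech2.OSPAux m (finalB C m₁ m₂ qb) Q := by
  rw [finalB]
  simp only [Mech2.OSPAux]
  constructor
  · intro hm r hr r' hr' hne
    subst hm
    simp only [Mech2.run]
    rw [outcomeB_snd C m₁ m₂ qb hC h12 hall (r.1 m₁) (r.1 m₂) (hQ r hr),
      outcomeB_snd C m₁ m₂ qb hC h12 hall (r'.1 m₁) (r'.1 m₂) (hQ r' hr')]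
    exact not_outPrefers_firstIn (fun w' h => (firstIn_mem h).2)
  · intro p₂
    constructor
    · intro hm r hr r' hr' hne
      subst hm
      obtain ⟨hrQ, hre⟩ := hr
      obtain ⟨hr'Q, hr'e⟩ := hr'
      injection hre with _ h2
      have hCeq : ∀ z, C (twoProf m₁ z (r.1 m₂)) qb = C (twoProf m₁ z p₂) qb := by
        intro z
        have := congrFun h2 z
        injection this with h3
      simp only [Mech2.run]
      rw [← hCeq (r.1 m₁), ← hCeq (r'.1 m₁)]
      rw [outcomeB_fst C m₁ m₂ qb hC h12 hall (r.1 m₁) (r.1 m₂) (hQ r hrQ),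
        outcomeB_fst C m₁ m₂ qb hC h12 hall (r'.1 m₁) (r.1 m₂) (hQ r' hr'Q)]
      exact not_outPrefers_firstIn (fun w' h => (firstIn_mem h).2)
    · intro p₁
      trivial

theorem osp_menPhase (hC : IsMOptimalStableRule2 C) (h12 : m₁ ≠ m₂)
    (hall : ∀ m : M, m = m₁ ∨ m = m₂) (m : M)
    (P : Set ((M → PrefList W) × (W → PrefList M))) :
    Mech2.OSPAux m (menPhase C m₁ m₂ qb) P := by
  have hAB : finalA C m₁ m₂ qb ≠ finalB C m₁ m₂ qb := by
    intro h
    unfold finalA finalB at h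
    injection h with h1 _
    exact h12 h1
  rw [menPhase]
  simp only [Mech2.OSPAux]
  constructor
  · intro hm r hr r' hr' hne
    subst hm
    by_cases hc : (clinch m₁ m₂ qb (r.1 m₁)).isSome <;>
      by_cases hc' : (clinch m₁ m₂ qb (r'.1 m₁)).isSome
    · rw [if_pos hc, if_pos hc'] at hne
      exact absurd rfl hne
    · -- r clinches, r' passes
      rw [if_pos hc, if_neg hc']
      rw [run_finalA C m₁ m₂ qb h12 hall r.1 r.2, run_finalB C m₁ m₂ qb h12 hall r'.1 r'.2]
      obtain ⟨w₀, hw₀⟩ := Option.isSome_iff_exists.1 hc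
      have hc'n : clinch m₁ m₂ qb (r'.1 m₁) = none := Option.not_isSome_iff_eq_none.1 hc'
      have o1 : (C r.1 qb).toFun m₁ = some w₀ := by
        have := (outcomeA C m₁ m₂ qb hC h12 hall (r.1 m₁) (r.1 m₂) hw₀).1
        rwa [twoProf_self m₁ m₂ h12 hall r.1] at this
      have o1' : (C r'.1 qb).toFun m₁ = firstIn (r'.1 m₁)
          (fun w => poolOf qb m₁ w ∧ clinch m₂ m₁ qb (r'.1 m₂) ≠ some w) := by
        have := outcomeB_fst C m₁ m₂ qb hC h12 hall (r'.1 m₁) (r'.1 m₂) hc'n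
        rwa [twoProf_self m₁ m₂ h12 hall r'.1] at this
      rw [o1, o1', ← (clinch_eq_some hw₀).1]
      exact not_outPrefers_firstIn (fun w' h => (firstIn_mem h).2.1)
    · -- r passes, r' clinches
      rw [if_neg hc, if_pos hc']
      rw [run_finalB C m₁ m₂ qb h12 hall r.1 r.2, run_finalA C m₁ m₂ qb h12 hall r'.1 r'.2]
      obtain ⟨w₀', hw₀'⟩ := Option.isSome_iff_exists.1 hc'
      have hcn : clinch m₁ m₂ qb (r.1 m₁) = none := Option.not_isSome_iff_eq_none.1 hc
      have hs' := clinch_eq_some hw₀'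
      have o1 : (C r.1 qb).toFun m₁ = firstIn (r.1 m₁)
          (fun w => poolOf qb m₁ w ∧ clinch m₂ m₁ qb (r.1 m₂) ≠ some w) := by
        have := outcomeB_fst C m₁ m₂ qb hC h12 hall (r.1 m₁) (r.1 m₂) hcn
        rwa [twoProf_self m₁ m₂ h12 hall r.1] at this
      have o1' : (C r'.1 qb).toFun m₁ = some w₀' := by
        have := (outcomeA C m₁ m₂ qb hC h12 hall (r'.1 m₁) (r'.1 m₂) hw₀').1
        rwa [twoProf_self m₁ m₂ h12 hall r'.1] at this
      rw [o1, o1']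
      apply not_outPrefers_firstIn
      intro w' h
      cases h
      refine ⟨(firstIn_mem hs'.1).2, ?_⟩
      intro hc2
      obtain ⟨hf2, hT2⟩ := clinch_eq_some hc2
      have h1 : m₁ ∈ (qb w₀').val := (firstIn_mem hs'.1).2
      have h2 : m₂ ∈ (qb w₀').val := (firstIn_mem hf2).2
      rcases aux_prefers_total h2 h1 (Ne.symm h12) with hp | hp
      · exact hs'.2 hp
      · exact hT2 hp
    · rw [if_neg hc, if_neg hc'] at hne
      exact absurd rfl hne
  · intro p
    by_cases hcp : (clinch m₁ m₂ qb p).isSome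
    · rw [if_pos hcp]
      apply osp_finalA C m₁ m₂ qb hC h12 hall m
      intro r hr
      obtain ⟨_, hre⟩ := hr
      by_contra hcr
      rw [if_neg hcr] at hre
      exact hAB hre.symm
    · rw [if_neg hcp]
      apply osp_finalB C m₁ m₂ qb hC h12 hall m
      intro r hr
      obtain ⟨_, hre⟩ := hr
      by_cases hcr : (clinch m₁ m₂ qb (r.1 m₁)).isSome
      · rw [if_pos hcr] at hre
        exact absurd hre hAB
      · exact Option.not_isSome_iff_eq_none.1 hcr

theorem osp_womenChain (hC : IsMOptimalStableRule2 C) (h12 : m₁ ≠ m₂)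
    (hall : ∀ m : M, m = m₁ ∨ m = m₂) (m : M) (ws : List W) :
    ∀ (f : W → PrefList M) (P : Set ((M → PrefList W) × (W → PrefList M))),
    Mech2.OSPAux m (womenChain C m₁ m₂ ws f) P := by
  induction ws with
  | nil =>
    intro f P
    rw [womenChain]
    exact osp_menPhase C m₁ m₂ f hC h12 hall m P
  | cons w ws ih =>
    intro f P
    rw [womenChain]
    simp only [Mech2.OSPAux]
    intro p
    exact ih _ _

end Tree

/-- If `|M| = 2`, then the two-sides-querying M-optimal stable matching
rule is implemented by some two-sides-querying matching mechanism that is OSP for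
every man. -/
theorem two_sided_mOptimal_OSP_of_two_men
    {M W : Type} [Fintype M] [Fintype W]
    (hM : Fintype.card M = 2)
    (C : (M → PrefList W) → (W → PrefList M) → Matching M W)
    (hC : IsMOptimalStableRule2 C) :
    ∃ I : Mech2 M W, (∀ m : M, I.OSPForM m) ∧
      ∀ pbar qbar, I.run pbar qbar = C pbar qbar := by
  haveI : DecidableEq M := Classical.decEq M
  obtain ⟨m₁, m₂, h12, huniv⟩ := (Finset.card_eq_two (s := (Finset.univ : Finset M))).1 hM
  have hall : ∀ m : M, m = m₁ ∨ m = m₂ := fun m => by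
    have hm : m ∈ (Finset.univ : Finset M) := Finset.mem_univ m
    rw [huniv] at hm
    simpa using hm
  refine ⟨womenChain C m₁ m₂ Finset.univ.toList (fun _ => ⟨[], List.nodup_nil⟩), ?_, ?_⟩
  · intro m
    exact osp_womenChain C m₁ m₂ hC h12 hall m Finset.univ.toList _ _
  · intro pbar qbar
    refine run_womenChain C m₁ m₂ h12 hall Finset.univ.toList _ pbar qbar ?_
    intro w hw
    exact absurd (Finset.mem_toList.2 (Finset.mem_univ w)) hw
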